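/- Let n, m, p be positive natural numbers and let A (n×n), B (n×m), C (p×n) be complex matrices, Q₀ an n×n positive semidefinite Hermitian matrix, R₀ an m×m positive definite Hermitian matrix, V a p×p positive definite Hermitian matrix, and W an n×n positive semidefinite Hermitian matrix. Let Γ be a positive semidefinite Hermitian matrix solving Γ = A·Γ·Aᴴ − A·Γ·Cᴴ·(C·Γ·Cᴴ + V)⁻¹·C·Γ·Aᴴ + W, and set L = Γ·Cᴴ·(C·Γ·Cᴴ + V)⁻¹. For each real α > 0, let P_α be a positive semidefinite Hermitian matrix solving P = Aᴴ·P·A − (Aᴴ·P·B)·(R₀/α + Bᴴ·P·B)⁻¹·(Bᴴ·P·A) + α·Q₀, set K_α = (Bᴴ·P_α·B + R₀/α)⁻¹·Bᴴ·P_α·A, assume A − B·K_α is Schur stable, and let F_α be the positive semidefinite Hermitian solution of F = L·(C·Γ·Cᴴ + V)·Lᴴ + (A − B·K_α)·F·(A − B·K_α)ᴴ. Define P_track(α) = trace(Q₀·(Γ + F_α)) and P_effort(α) = trace(K_αᴴ·R₀·K_α·F_α). Then for all 0 < α ≤ α′: P_track(α′) ≤ P_track(α) and P_effort(α) ≤ P_effort(α′).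 -/

import Mathlib

open Matrix
open scoped ComplexOrder

lemma psd_trace_nonneg {n : ℕ} {M : Matrix (Fin n) (Fin n) ℂ} (hM : M.PosSemidef) :
    0 ≤ M.trace := by
  apply Finset.sum_nonneg
  intro i _
  simpa [dotProduct, Matrix.mulVec, Pi.single_apply] using hM.dotProduct_mulVec_nonneg (Pi.single i 1)

open scoped MatrixOrder in
lemma psd_trace_mul_nonneg {n : ℕ} {X Y : Matrix (Fin n) (Fin n) ℂ}
    (hX : X.PosSemidef) (hY : Y.PosSemidef) : 0 ≤ (X * Y).trace := by
  obtain ⟨S, h1⟩ := CStarAlgebra.nonneg_iff_eq_star_mul_self.mp hY.nonneg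
  rw [h1, star_eq_conjTranspose, ← Matrix.mul_assoc, Matrix.trace_mul_comm, ← Matrix.mul_assoc]
  exact psd_trace_nonneg (hX.mul_mul_conjTranspose_same _)

lemma smul_posDef {n : ℕ} {R₀ : Matrix (Fin n) (Fin n) ℂ} (hR : R₀.PosDef)
    {c : ℝ} (hc : 0 < c) : ((c : ℂ) • R₀).PosDef := by
  constructor
  · have := hR.isHermitian
    rw [Matrix.IsHermitian, Matrix.conjTranspose_smul, this.eq]
    congr 1
    simp [Complex.star_def]
  · exact (hR.smul (show (0:ℂ) < c by exact_mod_cast hc)).2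

lemma real_of_nonneg' {z : ℂ} (h : 0 ≤ z) : z = (z.re : ℂ) := by
  have him := (Complex.le_def.1 h).2
  exact Complex.ext rfl (by simp [← him])

lemma riccati_cost_identity {n m : ℕ}
    (A Pm Q Sg F' : Matrix (Fin n) (Fin n) ℂ) (B : Matrix (Fin n) (Fin m) ℂ)
    (R S : Matrix (Fin m) (Fin m) ℂ) (K' K0 : Matrix (Fin m) (Fin n) ℂ)
    (hS : S = R + Bᴴ * Pm * B)
    (hSinv : S * S⁻¹ = 1) (hinvS : S⁻¹ * S = 1)
    (hPh : Pmᴴ = Pm) (hSh : Sᴴ = S)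
    (hcare : Pm = Aᴴ * Pm * A - (Aᴴ * Pm * B) * S⁻¹ * (Bᴴ * Pm * A) + Q)
    (hK0 : K0 = S⁻¹ * (Bᴴ * Pm * A))
    (hlyap : F' = Sg + (A - B * K') * F' * (A - B * K')ᴴ) :
    (Q * F').trace + (K'ᴴ * R * K' * F').trace
      = (Pm * Sg).trace + ((K' - K0)ᴴ * S * (K' - K0) * F').trace := by
  have e1 : S * K0 = Bᴴ * Pm * A := by rw [hK0, ← Matrix.mul_assoc, hSinv, Matrix.one_mul]
  have e2 : K0ᴴ * S = Aᴴ * Pm * B := by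
    have h : K0ᴴ = (Aᴴ * Pm * B) * S⁻¹ := by
      rw [hK0, Matrix.conjTranspose_mul]
      rw [show (Bᴴ * Pm * A)ᴴ = Aᴴ * Pm * B by
        simp [Matrix.conjTranspose_mul, hPh, Matrix.mul_assoc]]
      congr 1
      rw [Matrix.conjTranspose_nonsing_inv, hSh]
    rw [h, Matrix.mul_assoc, hinvS, Matrix.mul_one]
  have f1 : K'ᴴ * S * K0 = K'ᴴ * (Bᴴ * Pm * A) := by rw [Matrix.mul_assoc, e1]
  have f3 : K0ᴴ * S * K0 = (Aᴴ * Pm * B) * S⁻¹ * (Bᴴ * Pm * A) := by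
    rw [e2, hK0, ← Matrix.mul_assoc]
  have hmid : Q + K'ᴴ * R * K'
      = Pm - (A - B * K')ᴴ * Pm * (A - B * K') + (K' - K0)ᴴ * S * (K' - K0) := by
    have expand2 : (K' - K0)ᴴ * S * (K' - K0)
        = K'ᴴ * S * K' - K'ᴴ * S * K0 - K0ᴴ * S * K' + K0ᴴ * S * K0 := by
      simp only [Matrix.conjTranspose_sub, Matrix.sub_mul, Matrix.mul_sub]
      abel
    rw [expand2, f1, f3, e2]
    nth_rewrite 1 [hcare]
    rw [hS]
    simp only [Matrix.conjTranspose_sub, Matrix.conjTranspose_mul, hPh, Matrix.sub_mul,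
      Matrix.mul_sub, Matrix.add_mul, Matrix.mul_add, Matrix.mul_assoc]
    abel
  have hSg : F' - (A - B * K') * F' * (A - B * K')ᴴ = Sg := by
    nth_rewrite 1 [hlyap]
    abel
  have htr : ((A - B * K')ᴴ * Pm * (A - B * K') * F').trace
      = (Pm * ((A - B * K') * F' * (A - B * K')ᴴ)).trace := by
    rw [show (A - B * K')ᴴ * Pm * (A - B * K') * F'
        = (A - B * K')ᴴ * (Pm * (A - B * K') * F') by
      simp only [Matrix.mul_assoc],
      Matrix.trace_mul_comm]
    congr 1
    simp only [Matrix.mul_assoc]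
  calc (Q * F').trace + (K'ᴴ * R * K' * F').trace
      = ((Q + K'ᴴ * R * K') * F').trace := by rw [Matrix.add_mul, Matrix.trace_add]
    _ = ((Pm - (A - B * K')ᴴ * Pm * (A - B * K') + (K' - K0)ᴴ * S * (K' - K0)) * F').trace := by
        rw [hmid]
    _ = (Pm * F').trace - ((A - B * K')ᴴ * Pm * (A - B * K') * F').trace
        + ((K' - K0)ᴴ * S * (K' - K0) * F').trace := by
        rw [Matrix.add_mul, Matrix.sub_mul, Matrix.trace_add, Matrix.trace_sub]
    _ = (Pm * Sg).trace + ((K' - K0)ᴴ * S * (K' - K0) * F').trace := by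
        rw [htr, ← Matrix.trace_sub, ← Matrix.mul_sub, hSg]

/-- A square complex matrix is Schur stable if every eigenvalue has modulus
strictly less than 1. -/
def IsSchurStable {n : ℕ} (M : Matrix (Fin n) (Fin n) ℂ) : Prop :=
  ∀ z ∈ spectrum ℂ M, ‖z‖ < 1

set_option maxHeartbeats 1000000 in
/-- Discrete-time LQG with weights `Q(α) = α Q₀`, `R(α) = R₀ / α`: the
stationary tracking error `P_track(α) = tr (Q₀ (Γ + F_α))` is decreasing in `α`
and the stationary control effort `P_effort(α) = tr (K_αᴴ R₀ K_α F_α)` is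
increasing in `α`. -/
theorem lqg_dt_track_decreasing_effort_increasing {n m p : ℕ}
    (hn : 0 < n) (hm : 0 < m) (hp : 0 < p)
    (A : Matrix (Fin n) (Fin n) ℂ) (B : Matrix (Fin n) (Fin m) ℂ)
    (C : Matrix (Fin p) (Fin n) ℂ)
    (Q₀ : Matrix (Fin n) (Fin n) ℂ) (hQ₀ : Q₀.PosSemidef)
    (R₀ : Matrix (Fin m) (Fin m) ℂ) (hR₀ : R₀.PosDef)
    (V : Matrix (Fin p) (Fin p) ℂ) (hV : V.PosDef)
    (W : Matrix (Fin n) (Fin n) ℂ) (hW : W.PosSemidef)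
    -- discrete filter Riccati solution Γ and Kalman gain L
    (G : Matrix (Fin n) (Fin n) ℂ) (hG : G.PosSemidef)
    (hFARE : G = A * G * Aᴴ - A * G * Cᴴ * (C * G * Cᴴ + V)⁻¹ * C * G * Aᴴ + W)
    (L : Matrix (Fin n) (Fin p) ℂ) (hL : L = G * Cᴴ * (C * G * Cᴴ + V)⁻¹)
    -- discrete control Riccati solution P_α, gain K_α and covariance F_α, α > 0
    (P F : ℝ → Matrix (Fin n) (Fin n) ℂ)
    (K : ℝ → Matrix (Fin m) (Fin n) ℂ)
    (hP : ∀ α : ℝ, 0 < α → (P α).PosSemidef)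
    (hCARE : ∀ α : ℝ, 0 < α →
      P α = Aᴴ * P α * A
        - (Aᴴ * P α * B) * ((α : ℂ)⁻¹ • R₀ + Bᴴ * P α * B)⁻¹ * (Bᴴ * P α * A)
        + (α : ℂ) • Q₀)
    (hK : ∀ α : ℝ, 0 < α → K α = (Bᴴ * P α * B + (α : ℂ)⁻¹ • R₀)⁻¹ * Bᴴ * P α * A)
    (hSchur : ∀ α : ℝ, 0 < α → IsSchurStable (A - B * K α))
    (hF : ∀ α : ℝ, 0 < α → (F α).PosSemidef)
    (hLyap : ∀ α : ℝ, 0 < α →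
      F α = L * (C * G * Cᴴ + V) * Lᴴ + (A - B * K α) * F α * (A - B * K α)ᴴ) :
    ∀ α α' : ℝ, 0 < α → α ≤ α' →
      (Q₀ * (G + F α')).trace ≤ (Q₀ * (G + F α)).trace ∧
      ((K α)ᴴ * R₀ * K α * F α).trace ≤ ((K α')ᴴ * R₀ * K α' * F α').trace := by
  intro α α' hα hle
  rcases hle.eq_or_lt with heq | hlt
  · subst heq
    exact ⟨le_refl _, le_refl _⟩
  have hα' : 0 < α' := hα.trans hlt
  set Sg : Matrix (Fin n) (Fin n) ℂ := L * (C * G * Cᴴ + V) * Lᴴ with hSgdef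
  -- the cost identity for weight β and controller γ
  have cost : ∀ β γ : ℝ, 0 < β → 0 < γ →
      (β : ℂ) * (Q₀ * F γ).trace + (β : ℂ)⁻¹ * ((K γ)ᴴ * R₀ * K γ * F γ).trace
        = (P β * Sg).trace
          + ((K γ - K β)ᴴ * ((β : ℂ)⁻¹ • R₀ + Bᴴ * P β * B) * (K γ - K β) * F γ).trace
      ∧ 0 ≤ ((K γ - K β)ᴴ * ((β : ℂ)⁻¹ • R₀ + Bᴴ * P β * B) * (K γ - K β) * F γ).trace := by
    intro β γ hβ hγ
    have hRsm : (((β : ℂ))⁻¹ • R₀).PosDef := by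
      rw [show ((β : ℂ))⁻¹ = ((β⁻¹ : ℝ) : ℂ) by push_cast; ring]
      exact smul_posDef hR₀ (by positivity)
    have hSpd : ((β : ℂ)⁻¹ • R₀ + Bᴴ * P β * B).PosDef :=
      hRsm.add_posSemidef ((hP β hβ).conjTranspose_mul_mul_same B)
    set S : Matrix (Fin m) (Fin m) ℂ := (β : ℂ)⁻¹ • R₀ + Bᴴ * P β * B with hSdef
    have hdet : IsUnit S.det := isUnit_iff_ne_zero.2 hSpd.det_pos.ne'
    have hSinv : S * S⁻¹ = 1 := Matrix.mul_nonsing_inv S hdet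
    have hinvS : S⁻¹ * S = 1 := Matrix.nonsing_inv_mul S hdet
    have hK0 : K β = S⁻¹ * (Bᴴ * P β * A) := by
      rw [hK β hβ, hSdef, add_comm ((β : ℂ)⁻¹ • R₀) (Bᴴ * P β * B)]
      simp only [Matrix.mul_assoc]
    have key := riccati_cost_identity A (P β) ((β : ℂ) • Q₀) Sg (F γ) B
      ((β : ℂ)⁻¹ • R₀) S (K γ) (K β) hSdef hSinv hinvS (hP β hβ).isHermitian.eq
      hSpd.isHermitian.eq (hCARE β hβ) hK0 (hLyap γ hγ)
    constructor
    · rw [← key]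
      simp only [Matrix.smul_mul, Matrix.mul_smul, Matrix.trace_smul, smul_eq_mul]
    · exact psd_trace_mul_nonneg
        (hSpd.posSemidef.conjTranspose_mul_mul_same (K γ - K β)) (hF γ hγ)
  obtain ⟨eqαα, -⟩ := cost α α hα hα
  obtain ⟨eqαα', nnαα'⟩ := cost α α' hα hα'
  obtain ⟨eqα'α', -⟩ := cost α' α' hα' hα'
  obtain ⟨eqα'α, nnα'α⟩ := cost α' α hα' hα
  simp only [sub_self, Matrix.conjTranspose_zero, Matrix.zero_mul, Matrix.mul_zero,
    Matrix.trace_zero, add_zero] at eqαα eqα'α'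
  -- the two optimality inequalities in ℂ
  have ineq1 : (α : ℂ) * (Q₀ * F α).trace + (α : ℂ)⁻¹ * ((K α)ᴴ * R₀ * K α * F α).trace
      ≤ (α : ℂ) * (Q₀ * F α').trace + (α : ℂ)⁻¹ * ((K α')ᴴ * R₀ * K α' * F α').trace := by
    rw [eqαα, eqαα']
    exact le_add_of_nonneg_right nnαα'
  have ineq2 : (α' : ℂ) * (Q₀ * F α').trace + (α' : ℂ)⁻¹ * ((K α')ᴴ * R₀ * K α' * F α').trace
      ≤ (α' : ℂ) * (Q₀ * F α).trace + (α' : ℂ)⁻¹ * ((K α)ᴴ * R₀ * K α * F α).trace := by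
    rw [eqα'α', eqα'α]
    exact le_add_of_nonneg_right nnα'α
  -- realness
  have ht0 : 0 ≤ (Q₀ * F α).trace := psd_trace_mul_nonneg hQ₀ (hF α hα)
  have ht0' : 0 ≤ (Q₀ * F α').trace := psd_trace_mul_nonneg hQ₀ (hF α' hα')
  have he0 : 0 ≤ ((K α)ᴴ * R₀ * K α * F α).trace :=
    psd_trace_mul_nonneg (hR₀.posSemidef.conjTranspose_mul_mul_same (K α)) (hF α hα)
  have he0' : 0 ≤ ((K α')ᴴ * R₀ * K α' * F α').trace :=
    psd_trace_mul_nonneg (hR₀.posSemidef.conjTranspose_mul_mul_same (K α')) (hF α' hα')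
  set tr : ℝ := ((Q₀ * F α).trace).re
  set tr' : ℝ := ((Q₀ * F α').trace).re
  set er : ℝ := (((K α)ᴴ * R₀ * K α * F α).trace).re
  set er' : ℝ := (((K α')ᴴ * R₀ * K α' * F α').trace).re
  have hct : (Q₀ * F α).trace = (tr : ℂ) := real_of_nonneg' ht0
  have hct' : (Q₀ * F α').trace = (tr' : ℂ) := real_of_nonneg' ht0'
  have hce : ((K α)ᴴ * R₀ * K α * F α).trace = (er : ℂ) := real_of_nonneg' he0
  have hce' : ((K α')ᴴ * R₀ * K α' * F α').trace = (er' : ℂ) := real_of_nonneg' he0'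
  rw [hct, hct', hce, hce'] at ineq1 ineq2
  have r1 : α * tr + α⁻¹ * er ≤ α * tr' + α⁻¹ * er' := by exact_mod_cast ineq1
  have r2 : α' * tr' + α'⁻¹ * er' ≤ α' * tr + α'⁻¹ * er := by exact_mod_cast ineq2
  have h1 : α ^ 2 * tr + er ≤ α ^ 2 * tr' + er' := by
    have h := mul_le_mul_of_nonneg_left r1 hα.le
    have expand : ∀ x y : ℝ, α * (α * x + α⁻¹ * y) = α ^ 2 * x + y := by
      intro x y
      field_simp
    rw [expand, expand] at h
    exact h
  have h2 : α' ^ 2 * tr' + er' ≤ α' ^ 2 * tr + er := by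
    have h := mul_le_mul_of_nonneg_left r2 hα'.le
    have expand : ∀ x y : ℝ, α' * (α' * x + α'⁻¹ * y) = α' ^ 2 * x + y := by
      intro x y
      field_simp
    rw [expand, expand] at h
    exact h
  have hsq : α ^ 2 < α' ^ 2 := pow_lt_pow_left₀ hlt hα.le (by norm_num)
  have htt : tr' ≤ tr := by nlinarith [h1, h2, hsq]
  have hee : er ≤ er' := by nlinarith [h1, htt, sq_nonneg α]
  constructor
  · rw [Matrix.mul_add, Matrix.mul_add, Matrix.trace_add, Matrix.trace_add, hct, hct']
    exact add_le_add (le_refl _) (by exact_mod_cast htt)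
  · rw [hce, hce']
    exact_mod_cast hee
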